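/- Let n ≥ 1, j ≥ 1, p ≥ 1, and let ξ* = (1,0,…,0) ∈ ℝ^{4n} (so that (ξ*_{AA'}) has first two rows equal to the 2×2 identity and all other rows zero). Then ϑ ∈ Λ^j ℂ^{2n} ⊗ ⊙^p ℂ² satisfies σ_j^{(p)}(ξ*)ϑ = 0 if and only if: (i) ϑ(A₁,…,A_j; A'₁,…,A'_p) = 0 whenever A₁,…,A_j ∈ {2,…,2n−1}; and (ii) ϑ(1, A₂,…,A_j; 1, A'₂,…,A'_p) = −ϑ(0, A₂,…,A_j; 0, A'₂,…,A'_p) whenever A₂,…,A_j ∈ {2,…,2n−1} and A'₂,…,A'_p ∈ {0,1}. -/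

import Mathlib

noncomputable section

/-- The complex `2n × 2` matrix `(ξ_{AA'})` associated to `ξ ∈ ℝ^{4n}`:
row `2l` is `(ξ_{4l+1} + i ξ_{4l+2}, −ξ_{4l+3} − i ξ_{4l+4})` and row `2l+1` is
`(ξ_{4l+3} − i ξ_{4l+4}, ξ_{4l+1} − i ξ_{4l+2})` (using 1-based names, 0-based indices). -/
def xiMat (n : ℕ) (ξ : Fin (4 * n) → ℝ) : Matrix (Fin (2 * n)) (Fin 2) ℂ :=
  Matrix.of fun A A' =>
    if A.val % 2 = 0 then
      (if A'.val = 0 then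
        (⟨ξ ⟨4 * (A.val / 2), by have := A.isLt; omega⟩,
          ξ ⟨4 * (A.val / 2) + 1, by have := A.isLt; omega⟩⟩ : ℂ)
      else
        (⟨-ξ ⟨4 * (A.val / 2) + 2, by have := A.isLt; omega⟩,
          -ξ ⟨4 * (A.val / 2) + 3, by have := A.isLt; omega⟩⟩ : ℂ))
    else
      (if A'.val = 0 then
        (⟨ξ ⟨4 * (A.val / 2) + 2, by have := A.isLt; omega⟩,
          -ξ ⟨4 * (A.val / 2) + 3, by have := A.isLt; omega⟩⟩ : ℂ)
      else
        (⟨ξ ⟨4 * (A.val / 2), by have := A.isLt; omega⟩,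
          -ξ ⟨4 * (A.val / 2) + 1, by have := A.isLt; omega⟩⟩ : ℂ))

/-- The raised epsilon symbol on primed indices: `ε^{01} = −1`, `ε^{10} = 1`. -/
def epsUp (a b : Fin 2) : ℂ :=
  if a.val = 0 ∧ b.val = 1 then -1 else if a.val = 1 ∧ b.val = 0 then 1 else 0

/-- `ξ_A{}^{A'} = ∑_{B'} ξ_{AB'} ε^{B'A'}`. -/
def xiUp (n : ℕ) (ξ : Fin (4 * n) → ℝ) (A : Fin (2 * n)) (A' : Fin 2) : ℂ :=
  ∑ B' : Fin 2, xiMat n ξ A B' * epsUp B' A'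

/-- Membership in `Λ^q ℂ^{2n} ⊗ ⊙^p ℂ²`: totally antisymmetric in the `q` unprimed
arguments and totally symmetric in the `p` primed arguments. -/
def IsAltSym (n q p : ℕ) (ϑ : (Fin q → Fin (2 * n)) → (Fin p → Fin 2) → ℂ) : Prop :=
  (∀ (σ : Equiv.Perm (Fin q)) (a : Fin q → Fin (2 * n)) (b : Fin p → Fin 2),
      ϑ (a ∘ σ) b = ((Equiv.Perm.sign σ : ℤ) : ℂ) * ϑ a b) ∧
  (∀ (σ : Equiv.Perm (Fin p)) (a : Fin q → Fin (2 * n)) (b : Fin p → Fin 2),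
      ϑ a (b ∘ σ) = ϑ a b)

/-- The first-order symbol map
`σ_j^{(p+1)}(ξ) : Λ^j ℂ^{2n} ⊗ ⊙^{p+1} ℂ² → Λ^{j+1} ℂ^{2n} ⊗ ⊙^{p} ℂ²`,
`(σϑ)(A₀,…,A_j; B) = (1/(j+1)) ∑_s (−1)^s ∑_{a} ξ_{A_s}{}^{a} ϑ(A₀,…,Â_s,…,A_j; a, B)`. -/
def symb (n j p : ℕ) (ξ : Fin (4 * n) → ℝ)
    (ϑ : (Fin j → Fin (2 * n)) → (Fin (p + 1) → Fin 2) → ℂ) :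
    (Fin (j + 1) → Fin (2 * n)) → (Fin p → Fin 2) → ℂ :=
  fun A B => ((j + 1 : ℕ) : ℂ)⁻¹ * ∑ s : Fin (j + 1), (-1 : ℂ) ^ (s : ℕ) *
    ∑ a : Fin 2, xiUp n ξ (A s) a * ϑ (A ∘ s.succAbove) (Fin.cons a B)

namespace SymbAux

lemma xiUp_star (n : ℕ) (A : Fin (2 * n)) (a : Fin 2) :
    xiUp n (fun i => if i.val = 0 then 1 else 0) A a =
      if A.val = 0 then (if a.val = 1 then -1 else 0)
      else if A.val = 1 then (if a.val = 0 then 1 else 0) else 0 := by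
  unfold xiUp xiMat epsUp
  rw [Fin.sum_univ_two]
  rcases A with ⟨Av, hA⟩
  rcases a with ⟨av, ha⟩
  simp only [Matrix.of_apply, Fin.val_zero, Fin.val_one, Fin.isValue]
  norm_num
  rcases Nat.lt_or_ge Av 2 with h2 | h2
  · interval_cases Av <;> interval_cases av <;> norm_num [Complex.ext_iff]
  · rw [if_neg (show ¬ (Av = 0) by omega), if_neg (show ¬ (Av = 1) by omega)]
    have e1 : ¬ (Av / 2 = 0) := by omega
    split_ifs <;> simp_all [Complex.ext_iff]

lemma succAbove_val {q : ℕ} (p : Fin (q+1)) (t : Fin q) :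
    (p.succAbove t).val = if t.val < p.val then t.val else t.val + 1 := by
  rw [Fin.succAbove]
  by_cases h : t.castSucc < p
  · rw [if_pos h, if_pos (by simpa [Fin.lt_def] using h)]; simp
  · rw [if_neg h, if_neg (by simpa [Fin.lt_def] using h)]; simp

lemma swap_comp_succAbove_castSucc {q : ℕ} (i : Fin q) :
    (Equiv.swap i.castSucc i.succ) ∘ i.castSucc.succAbove = i.succ.succAbove := by
  funext t
  simp only [Function.comp_apply, Equiv.swap_apply_def]
  apply Fin.ext
  simp only [apply_ite (Fin.val), Fin.ext_iff, succAbove_val, Fin.coe_castSucc, Fin.val_succ]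
  split_ifs <;> omega

lemma swap_comp_succAbove_succ {q : ℕ} (i : Fin q) :
    (Equiv.swap i.castSucc i.succ) ∘ i.succ.succAbove = i.castSucc.succAbove := by
  funext t
  simp only [Function.comp_apply, Equiv.swap_apply_def]
  apply Fin.ext
  simp only [apply_ite (Fin.val), Fin.ext_iff, succAbove_val, Fin.coe_castSucc, Fin.val_succ]
  split_ifs <;> omega

lemma swap_comp_succAbove_of_ne {q : ℕ} (u v s : Fin (q+1)) (hu : u ≠ s) (hv : v ≠ s)
    (huv : u ≠ v) :
    ∃ u' v' : Fin q, u' ≠ v' ∧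
      (Equiv.swap u v) ∘ s.succAbove = s.succAbove ∘ (Equiv.swap u' v') := by
  obtain ⟨u', hu'⟩ := Fin.exists_succAbove_eq hu
  obtain ⟨v', hv'⟩ := Fin.exists_succAbove_eq hv
  refine ⟨u', v', ?_, ?_⟩
  · rintro rfl; exact huv (hu'.symm.trans hv')
  · funext t
    simp only [Function.comp_apply]
    rcases eq_or_ne t u' with rfl | htu
    · rw [Equiv.swap_apply_left, hu', Equiv.swap_apply_left, hv']
    rcases eq_or_ne t v' with rfl | htv
    · rw [Equiv.swap_apply_right, hv', Equiv.swap_apply_right, hu']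
    · rw [Equiv.swap_apply_of_ne_of_ne htu htv,
        Equiv.swap_apply_of_ne_of_ne (fun h => htu (Fin.succAbove_right_injective (h.trans hu'.symm)))
          (fun h => htv (Fin.succAbove_right_injective (h.trans hv'.symm)))]

variable {q : ℕ} {X : Type*}

/-- The alternating sum appearing in the symbol. -/
def S (h : X → (Fin q → X) → ℂ) (A : Fin (q+1) → X) : ℂ :=
  ∑ s : Fin (q+1), (-1 : ℂ) ^ (s : ℕ) * h (A s) (A ∘ s.succAbove)

lemma S_adjSwap (h : X → (Fin q → X) → ℂ)
    (hh : ∀ x (w : Fin q → X) (u v : Fin q), u ≠ v → h x (w ∘ Equiv.swap u v) = -h x w)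
    (i : Fin q) (A : Fin (q+1) → X) :
    S h (A ∘ Equiv.swap i.castSucc i.succ) = -S h A := by
  have hcd : i.castSucc ≠ i.succ := (Fin.castSucc_lt_succ : i.castSucc < i.succ).ne
  have key : ∀ s : Fin (q+1),
      (-1 : ℂ) ^ (s : ℕ) * h ((A ∘ Equiv.swap i.castSucc i.succ) s)
        ((A ∘ Equiv.swap i.castSucc i.succ) ∘ s.succAbove) =
      -((-1 : ℂ) ^ ((Equiv.swap i.castSucc i.succ s : Fin (q+1)) : ℕ) *
        h (A (Equiv.swap i.castSucc i.succ s))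
          (A ∘ (Equiv.swap i.castSucc i.succ s).succAbove)) := by
    intro s
    rcases eq_or_ne s i.castSucc with rfl | hsc
    · rw [Equiv.swap_apply_left]
      have h1 : (A ∘ Equiv.swap i.castSucc i.succ) ∘ Fin.succAbove i.castSucc =
          A ∘ i.succ.succAbove := by
        rw [Function.comp_assoc, swap_comp_succAbove_castSucc]
      rw [h1]
      have : ((-1 : ℂ) ^ ((i.castSucc : Fin (q+1)) : ℕ)) =
          -((-1 : ℂ) ^ ((i.succ : Fin (q+1)) : ℕ)) := by
        simp [Fin.coe_castSucc, Fin.val_succ, pow_succ]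
      rw [Function.comp_apply, Equiv.swap_apply_left, this]
      ring
    rcases eq_or_ne s i.succ with rfl | hss
    · rw [Equiv.swap_apply_right]
      have h1 : (A ∘ Equiv.swap i.castSucc i.succ) ∘ Fin.succAbove i.succ =
          A ∘ i.castSucc.succAbove := by
        rw [Function.comp_assoc, swap_comp_succAbove_succ]
      rw [h1]
      have : ((-1 : ℂ) ^ ((i.succ : Fin (q+1)) : ℕ)) =
          -((-1 : ℂ) ^ ((i.castSucc : Fin (q+1)) : ℕ)) := by
        simp [Fin.coe_castSucc, Fin.val_succ, pow_succ]
      rw [Function.comp_apply, Equiv.swap_apply_right, this]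
      ring
    · rw [Equiv.swap_apply_of_ne_of_ne hsc hss]
      obtain ⟨u', v', huv, hcomp⟩ :=
        swap_comp_succAbove_of_ne i.castSucc i.succ s hsc.symm hss.symm hcd
      have h1 : (A ∘ Equiv.swap i.castSucc i.succ) ∘ s.succAbove =
          (A ∘ s.succAbove) ∘ Equiv.swap u' v' := by
        rw [Function.comp_assoc, hcomp, Function.comp_assoc]
      rw [h1, Function.comp_apply, Equiv.swap_apply_of_ne_of_ne hsc hss,
        hh _ _ _ _ huv]
      ring
  calc S h (A ∘ Equiv.swap i.castSucc i.succ)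
      = ∑ s : Fin (q+1), -((-1 : ℂ) ^ ((Equiv.swap i.castSucc i.succ s : Fin (q+1)) : ℕ) *
        h (A (Equiv.swap i.castSucc i.succ s))
          (A ∘ (Equiv.swap i.castSucc i.succ s).succAbove)) := by
        unfold S; exact Finset.sum_congr rfl fun s _ => key s
    _ = -S h A := by
        rw [Finset.sum_neg_distrib, neg_inj]
        exact Equiv.sum_comp (Equiv.swap i.castSucc i.succ)
          (fun s => (-1 : ℂ) ^ (s : ℕ) * h (A s) (A ∘ s.succAbove))

lemma S_perm (h : X → (Fin q → X) → ℂ)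
    (hh : ∀ x (w : Fin q → X) (u v : Fin q), u ≠ v → h x (w ∘ Equiv.swap u v) = -h x w)
    (σ : Equiv.Perm (Fin (q+1))) (A : Fin (q+1) → X) :
    S h (A ∘ σ) = ((Equiv.Perm.sign σ : ℤ) : ℂ) * S h A := by
  have hσ : σ ∈ Submonoid.closure
      (Set.range fun i : Fin q => Equiv.swap i.castSucc i.succ) := by
    rw [Equiv.Perm.mclosure_swap_castSucc_succ]; trivial
  induction hσ using Submonoid.closure_induction generalizing A with
  | mem τ hτ =>
    obtain ⟨i, rfl⟩ := hτ
    rw [S_adjSwap h hh i A, Equiv.Perm.sign_swap (Fin.castSucc_lt_succ : i.castSucc < i.succ).ne]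
    norm_num
  | one => simp [S]
  | mul τ ρ hτ hρ ihτ ihρ =>
    have hcomp : A ∘ ⇑(τ * ρ) = (A ∘ ⇑τ) ∘ ⇑ρ := rfl
    rw [hcomp, ihρ, ihτ, map_mul]
    push_cast
    ring

lemma S_swap (h : X → (Fin q → X) → ℂ)
    (hh : ∀ x (w : Fin q → X) (u v : Fin q), u ≠ v → h x (w ∘ Equiv.swap u v) = -h x w)
    {u v : Fin (q+1)} (huv : u ≠ v) (A : Fin (q+1) → X) :
    S h (A ∘ Equiv.swap u v) = -S h A := by
  rw [S_perm h hh, Equiv.Perm.sign_swap huv]; norm_num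

lemma S_eq_zero_of_repeat (h : X → (Fin q → X) → ℂ)
    (hh : ∀ x (w : Fin q → X) (u v : Fin q), u ≠ v → h x (w ∘ Equiv.swap u v) = -h x w)
    {u v : Fin (q+1)} (huv : u ≠ v) (A : Fin (q+1) → X) (hA : A u = A v) :
    S h A = 0 := by
  have h1 : A ∘ Equiv.swap u v = A := by
    funext t
    simp only [Function.comp_apply, Equiv.swap_apply_def]
    split_ifs with h1 h2 <;> simp_all
  have := S_swap h hh huv A
  rw [h1] at this
  rw [eq_neg_iff_add_eq_zero] at this
  exact add_self_eq_zero.mp this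

end SymbAux
namespace SymbAux

/-- The inner sum of the symbol with `ξ = ξ*`, as a function of the removed index value
and the remaining unprimed arguments. -/
def hB (n j p : ℕ) (ϑ : (Fin (j + 1) → Fin (2 * n)) → (Fin (p + 1) → Fin 2) → ℂ)
    (B : Fin p → Fin 2) (x : Fin (2 * n)) (w : Fin (j + 1) → Fin (2 * n)) : ℂ :=
  ∑ a : Fin 2, xiUp n (fun i => if i.val = 0 then 1 else 0) x a * ϑ w (Fin.cons a B)

lemma hB_val (n j p : ℕ) (ϑ : (Fin (j + 1) → Fin (2 * n)) → (Fin (p + 1) → Fin 2) → ℂ)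
    (B : Fin p → Fin 2) (x : Fin (2 * n)) (w : Fin (j + 1) → Fin (2 * n)) :
    hB n j p ϑ B x w =
      if x.val = 0 then -ϑ w (Fin.cons 1 B)
      else if x.val = 1 then ϑ w (Fin.cons 0 B) else 0 := by
  unfold hB
  rw [Fin.sum_univ_two, xiUp_star, xiUp_star]
  by_cases h0 : x.val = 0
  · simp [h0]
  by_cases h1 : x.val = 1
  · simp [h0, h1]
  · simp [h0, h1]

lemma symb_apply (n j p : ℕ) (ϑ : (Fin (j + 1) → Fin (2 * n)) → (Fin (p + 1) → Fin 2) → ℂ)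
    (A : Fin (j + 1 + 1) → Fin (2 * n)) (B : Fin p → Fin 2) :
    symb n (j + 1) p (fun i => if i.val = 0 then 1 else 0) ϑ A B =
      ((j + 1 + 1 : ℕ) : ℂ)⁻¹ * S (hB n j p ϑ B) A := rfl

end SymbAux
namespace SymbAux

lemma succ_zero_succAbove_zero {m : ℕ} :
    ((0 : Fin (m+1)).succ).succAbove (0 : Fin (m+1)) = 0 := by
  apply Fin.ext; rw [succAbove_val]; simp

lemma succ_zero_succAbove_succ {m : ℕ} (r : Fin m) :
    ((0 : Fin (m+1)).succ).succAbove r.succ = r.succ.succ := by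
  apply Fin.ext; rw [succAbove_val]; simp

lemma comp_succAbove_zero {m : ℕ} {X : Type*} (g : Fin (m+1+1) → X) :
    g ∘ (0 : Fin (m+1+1)).succAbove =
      Fin.cons (g (0 : Fin (m+1)).succ) (fun t : Fin m => g t.succ.succ) := by
  rw [Fin.succAbove_zero]
  funext t
  refine Fin.cases rfl (fun r => ?_) t
  simp [Fin.cons_succ]

lemma comp_succAbove_one {m : ℕ} {X : Type*} (g : Fin (m+1+1) → X) :
    g ∘ ((0 : Fin (m+1)).succ).succAbove =
      Fin.cons (g 0) (fun t : Fin m => g t.succ.succ) := by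
  funext t
  refine Fin.cases ?_ (fun r => ?_) t
  · simp [Function.comp_apply, succ_zero_succAbove_zero]
  · simp [Function.comp_apply, succ_zero_succAbove_succ, Fin.cons_succ]

lemma cons_comp_succAbove_zero {m : ℕ} {X : Type*} (x : X) (g : Fin (m+1) → X) :
    (Fin.cons x g : Fin (m+1+1) → X) ∘ (0 : Fin (m+1+1)).succAbove = g := by
  rw [Fin.succAbove_zero]
  funext t
  simp [Fin.cons_succ]

end SymbAux
/-- Description of the kernel of `σ_j^{(p)}(ξ*)` for `ξ* = (1,0,…,0)` (here the
statement's `j` is `j+1` and `p` is `p+1`): `ϑ` lies in the kernel iff `ϑ` vanishes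
whenever all unprimed arguments are `≥ 2`, and
`ϑ(1,A₂,…;1,A'₂,…) = −ϑ(0,A₂,…;0,A'₂,…)` whenever `A₂,…,A_j ≥ 2`. -/
theorem symb_kernel_at_basepoint (n j p : ℕ) (hn : 1 ≤ n)
    (ϑ : (Fin (j + 1) → Fin (2 * n)) → (Fin (p + 1) → Fin 2) → ℂ)
    (hϑ : IsAltSym n (j + 1) (p + 1) ϑ) :
    symb n (j + 1) p (fun i => if i.val = 0 then 1 else 0) ϑ = 0 ↔
      ((∀ A : Fin (j + 1) → Fin (2 * n), (∀ t, 2 ≤ (A t).val) →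
          ∀ B : Fin (p + 1) → Fin 2, ϑ A B = 0) ∧
       (∀ A : Fin j → Fin (2 * n), (∀ t, 2 ≤ (A t).val) →
          ∀ B : Fin p → Fin 2,
            ϑ (Fin.cons ⟨1, by omega⟩ A) (Fin.cons 1 B) =
              -ϑ (Fin.cons ⟨0, by omega⟩ A) (Fin.cons 0 B))) := by
  obtain ⟨halt, -⟩ := hϑ
  have hswapϑ : ∀ (w : Fin (j+1) → Fin (2*n)) (b : Fin (p+1) → Fin 2) (u v : Fin (j+1)),
      u ≠ v → ϑ (w ∘ Equiv.swap u v) b = -ϑ w b := by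
    intro w b u v huv
    rw [halt (Equiv.swap u v) w b, Equiv.Perm.sign_swap huv]
    norm_num
  have hh : ∀ B : Fin p → Fin 2, ∀ (x : Fin (2*n)) (w : Fin (j+1) → Fin (2*n))
      (u v : Fin (j+1)), u ≠ v →
      SymbAux.hB n j p ϑ B x (w ∘ Equiv.swap u v) = -SymbAux.hB n j p ϑ B x w := by
    intro B x w u v huv
    rw [SymbAux.hB_val, SymbAux.hB_val, hswapϑ _ _ _ _ huv, hswapϑ _ _ _ _ huv]
    split_ifs <;> ring
  have hc : ((j + 1 + 1 : ℕ) : ℂ) ≠ 0 := Nat.cast_ne_zero.mpr (by omega)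
  have hiff : symb n (j+1) p (fun i => if i.val = 0 then 1 else 0) ϑ = 0 ↔
      ∀ (A : Fin (j+1+1) → Fin (2*n)) (B : Fin p → Fin 2),
        SymbAux.S (SymbAux.hB n j p ϑ B) A = 0 := by
    constructor
    · intro H A B
      have h1 := congrFun (congrFun H A) B
      rw [SymbAux.symb_apply] at h1
      simp only [Pi.zero_apply] at h1
      rcases mul_eq_zero.mp h1 with h2 | h2
      · exact absurd h2 (inv_ne_zero hc)
      · exact h2
    · intro H
      funext A B
      rw [SymbAux.symb_apply, H A B, mul_zero]
      simp
  rw [hiff]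
  constructor
  · -- forward
    intro H
    constructor
    · intro A hA B
      have key : ∀ (c : Fin (2*n)) (B' : Fin p → Fin 2),
          SymbAux.S (SymbAux.hB n j p ϑ B') (Fin.cons c A) =
            (if c.val = 0 then -ϑ A (Fin.cons 1 B')
             else if c.val = 1 then ϑ A (Fin.cons 0 B') else 0) := by
        intro c B'
        unfold SymbAux.S
        rw [Fin.sum_univ_succ]
        have hrest : ∀ s : Fin (j+1),
            (-1:ℂ) ^ (((s.succ : Fin (j+1+1))) : ℕ) *
              SymbAux.hB n j p ϑ B' ((Fin.cons c A : Fin (j+1+1) → Fin (2*n)) s.succ)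
                ((Fin.cons c A : Fin (j+1+1) → Fin (2*n)) ∘ (s.succ).succAbove) = 0 := by
          intro s
          rw [Fin.cons_succ, SymbAux.hB_val, if_neg (by have := hA s; omega),
            if_neg (by have := hA s; omega), mul_zero]
        rw [Finset.sum_eq_zero (fun s _ => hrest s), add_zero, Fin.cons_zero,
          SymbAux.cons_comp_succAbove_zero, SymbAux.hB_val]
        simp
      have k0 : ∀ B' : Fin p → Fin 2, ϑ A (Fin.cons 0 B') = 0 := by
        intro B'
        have h1 := H (Fin.cons ⟨1, by omega⟩ A) B'
        rw [key] at h1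
        simpa using h1
      have k1 : ∀ B' : Fin p → Fin 2, ϑ A (Fin.cons 1 B') = 0 := by
        intro B'
        have h1 := H (Fin.cons ⟨0, by omega⟩ A) B'
        rw [key] at h1
        simpa using h1
      have hB0 : B 0 = 0 ∨ B 0 = 1 := by omega
      rcases hB0 with h0 | h0
      · have h1 := k0 (Fin.tail B); rwa [← h0, Fin.cons_self_tail] at h1
      · have h1 := k1 (Fin.tail B); rwa [← h0, Fin.cons_self_tail] at h1
    · intro A hA B
      have h1 := H (Fin.cons (⟨0, by omega⟩ : Fin (2*n))
        (Fin.cons (⟨1, by omega⟩ : Fin (2*n)) A : Fin (j+1) → Fin (2*n))) B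
      unfold SymbAux.S at h1
      rw [Fin.sum_univ_succ, Fin.sum_univ_succ] at h1
      have hrest : ∀ s : Fin j,
          (-1:ℂ) ^ ((((s.succ : Fin (j+1)).succ : Fin (j+1+1))) : ℕ) *
            SymbAux.hB n j p ϑ B
              ((Fin.cons (⟨0, by omega⟩ : Fin (2*n))
                (Fin.cons (⟨1, by omega⟩ : Fin (2*n)) A) : Fin (j+1+1) → Fin (2*n))
                (s.succ).succ)
              ((Fin.cons (⟨0, by omega⟩ : Fin (2*n))
                (Fin.cons (⟨1, by omega⟩ : Fin (2*n)) A) : Fin (j+1+1) → Fin (2*n)) ∘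
                ((s.succ).succ).succAbove) = 0 := by
        intro s
        rw [Fin.cons_succ, Fin.cons_succ, SymbAux.hB_val,
          if_neg (by have := hA s; omega), if_neg (by have := hA s; omega), mul_zero]
      rw [Finset.sum_eq_zero (fun s _ => hrest s), add_zero,
        SymbAux.cons_comp_succAbove_zero, SymbAux.comp_succAbove_one,
        Fin.cons_zero, Fin.cons_succ, Fin.cons_zero] at h1
      have hc0 : (Fin.cons (⟨0, by omega⟩ : Fin (2*n))
          (fun t : Fin j => (Fin.cons (⟨0, by omega⟩ : Fin (2*n))
            (Fin.cons (⟨1, by omega⟩ : Fin (2*n)) A : Fin (j+1) → Fin (2*n)) :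
              Fin (j+1+1) → Fin (2*n)) t.succ.succ))
          = (Fin.cons (⟨0, by omega⟩ : Fin (2*n)) A : Fin (j+1) → Fin (2*n)) := by
        congr 1
      rw [SymbAux.hB_val, SymbAux.hB_val, hc0] at h1
      norm_num at h1
      linear_combination -h1
  · -- reverse
    rintro ⟨Hi, Hii⟩ A B
    by_cases hinj : Function.Injective A
    · have hzero : ∀ A' : Fin (j+1+1) → Fin (2*n), StrictMono A' →
          SymbAux.S (SymbAux.hB n j p ϑ B) A' = 0 := by
        intro A' hsm
        have hmono := hsm.monotone
        by_cases h0 : 2 ≤ (A' 0).val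
        · refine Finset.sum_eq_zero fun s _ => ?_
          have hs : 2 ≤ (A' s).val := by
            have h2 := hmono (Fin.zero_le s)
            rw [Fin.le_def] at h2
            omega
          rw [SymbAux.hB_val, if_neg (by omega), if_neg (by omega), mul_zero]
        · have hsucc : ∀ t : Fin (j+1), (A' 0).val < (A' t.succ).val := by
            intro t
            have := hsm (show (0 : Fin (j+1+1)) < t.succ by
              rw [Fin.lt_def]; simp [Fin.val_succ])
            rwa [Fin.lt_def] at this
          by_cases h1 : (A' 0).val = 1
          · -- first entry 1, rest ≥ 2
            unfold SymbAux.S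
            rw [Fin.sum_univ_succ]
            have hrest : ∀ s : Fin (j+1),
                (-1:ℂ) ^ (((s.succ : Fin (j+1+1))) : ℕ) *
                  SymbAux.hB n j p ϑ B (A' s.succ) (A' ∘ (s.succ).succAbove) = 0 := by
              intro s
              rw [SymbAux.hB_val, if_neg (by have := hsucc s; omega),
                if_neg (by have := hsucc s; omega), mul_zero]
            rw [Finset.sum_eq_zero (fun s _ => hrest s), add_zero, SymbAux.hB_val,
              if_neg (by omega), if_pos h1]
            have : ϑ (A' ∘ (0 : Fin (j+1+1)).succAbove) (Fin.cons 0 B) = 0 := by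
              apply Hi
              intro t
              rw [Fin.succAbove_zero]
              have := hsucc t
              simp only [Function.comp_apply]
              omega
            rw [this, mul_zero]
          · have h00 : (A' 0).val = 0 := by omega
            have hsucc2 : ∀ t : Fin j, (A' (0:Fin (j+1)).succ).val < (A' t.succ.succ).val := by
              intro t
              have := hsm (show ((0:Fin (j+1)).succ : Fin (j+1+1)) < t.succ.succ by
                rw [Fin.lt_def]; simp [Fin.val_succ])
              rwa [Fin.lt_def] at this
            by_cases h2 : (A' (0:Fin (j+1)).succ).val = 1
            · -- entries 0, 1, then ≥ 2 : use Hii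
              unfold SymbAux.S
              rw [Fin.sum_univ_succ, Fin.sum_univ_succ]
              have hrest : ∀ s : Fin j,
                  (-1:ℂ) ^ ((((s.succ : Fin (j+1)).succ : Fin (j+1+1))) : ℕ) *
                    SymbAux.hB n j p ϑ B (A' (s.succ).succ)
                      (A' ∘ ((s.succ).succ).succAbove) = 0 := by
                intro s
                rw [SymbAux.hB_val, if_neg (by have := hsucc2 s; omega),
                  if_neg (by have := hsucc2 s; omega), mul_zero]
              rw [Finset.sum_eq_zero (fun s _ => hrest s), add_zero,
                SymbAux.comp_succAbove_zero, SymbAux.comp_succAbove_one,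
                SymbAux.hB_val, SymbAux.hB_val, if_pos h00, if_neg (by omega), if_pos h2]
              have hA0 : A' 0 = ⟨0, by omega⟩ := Fin.ext h00
              have hA1 : A' (0:Fin (j+1)).succ = ⟨1, by omega⟩ := Fin.ext h2
              have hge : ∀ t : Fin j, 2 ≤ (A' t.succ.succ).val := by
                intro t; have := hsucc2 t; omega
              rw [hA0, hA1]
              have hii := Hii (fun t : Fin j => A' t.succ.succ) hge B
              simp only [Fin.val_succ, Fin.val_zero, pow_zero, pow_one, one_mul]
              rw [hii]
              ring
            · -- entries 0 then ≥ 2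
              have hge : ∀ t : Fin (j+1), 2 ≤ (A' t.succ).val := by
                intro t
                rcases Fin.eq_zero_or_eq_succ t with rfl | ⟨r, rfl⟩
                · have := hsucc 0; omega
                · have h3 := hsucc2 r; have h4 := hsucc 0; omega
              unfold SymbAux.S
              rw [Fin.sum_univ_succ]
              have hrest : ∀ s : Fin (j+1),
                  (-1:ℂ) ^ (((s.succ : Fin (j+1+1))) : ℕ) *
                    SymbAux.hB n j p ϑ B (A' s.succ) (A' ∘ (s.succ).succAbove) = 0 := by
                intro s
                rw [SymbAux.hB_val, if_neg (by have := hge s; omega),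
                  if_neg (by have := hge s; omega), mul_zero]
              rw [Finset.sum_eq_zero (fun s _ => hrest s), add_zero, SymbAux.hB_val,
                if_pos h00]
              have : ϑ (A' ∘ (0 : Fin (j+1+1)).succAbove) (Fin.cons 1 B) = 0 := by
                apply Hi
                intro t
                rw [Fin.succAbove_zero]
                exact hge t
              rw [this, neg_zero, mul_zero]
      have hper := SymbAux.S_perm (SymbAux.hB n j p ϑ B) (hh B) (Tuple.sort A) A
      have hsm : StrictMono (A ∘ Tuple.sort A) :=
        (Tuple.monotone_sort A).strictMono_of_injective
          (hinj.comp (Tuple.sort A).injective)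
      rw [hzero _ hsm] at hper
      have hsgn : ((Equiv.Perm.sign (Tuple.sort A) : ℤ) : ℂ) ≠ 0 := by
        rcases Int.units_eq_one_or (Equiv.Perm.sign (Tuple.sort A)) with h | h <;>
          simp [h]
      rcases mul_eq_zero.mp hper.symm with h | h
      · exact absurd h hsgn
      · exact h
    · obtain ⟨u, v, hAuv, huv⟩ := Function.not_injective_iff.mp hinj
      exact SymbAux.S_eq_zero_of_repeat (SymbAux.hB n j p ϑ B) (hh B) huv A hAuv
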